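/- arXiv:1509.00899 — 2 statements merged into one kernel-verified Lean document; each statement's English description precedes it below -/
import Mathlib

section
/- Under Model (2), with (ρ̄_n) satisfying |ρ̄_n − ρ*| = O_P(n^{−1/2}), setting w* = z − ρ* Bz and w̄ = z − ρ̄_n Bz, the sequence sup_{t ∈ A_{n,m}} |J_n(w̄, t) − J_n(w*, t)| is O_P(n^{−1/2}); in particular it converges to 0 in probability as n → ∞. -/
open MeasureTheory ProbabilityTheory Filter
open scoped RealInnerProductSpace

noncomputable section

/-- `X n = O_P(a n)`: for every `ε > 0` there are `M > 0` and `N` such that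
`P(|X n| > M * a n) ≤ ε` for all `n ≥ N`. -/
def IsBigOP {Ω : Type*} [MeasurableSpace Ω] (P : Measure Ω)
    (X : ℕ → Ω → ℝ) (a : ℕ → ℝ) : Prop :=
  ∀ ε : ℝ, 0 < ε → ∃ M : ℝ, 0 < M ∧ ∃ N : ℕ, ∀ n, N ≤ n →
    (P {ω | M * a n < |X n ω|}).toReal ≤ ε

/-- `A_{n,m}`: admissible change-point configurations
`0 = t_0 < t_1 < ⋯ < t_m < t_{m+1} = n`. -/
def Anm (n m : ℕ) : Set (Fin (m + 2) → ℕ) :=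
  {t | t 0 = 0 ∧ t (Fin.last (m + 1)) = n ∧ StrictMono t}

/-- the indicator vector of the `k`-th segment `(t_k, t_{k+1}]` (coordinates `1,…,n`). -/
def segVec (n m : ℕ) (t : Fin (m + 2) → ℕ) (k : Fin (m + 1)) :
    EuclideanSpace ℝ (Fin n) :=
  WithLp.toLp 2 fun i => if t k.castSucc < (i : ℕ) + 1 ∧ (i : ℕ) + 1 ≤ t k.succ then 1 else 0

/-- the linear span `E_t` of the segment indicator vectors. -/
def Esp (n m : ℕ) (t : Fin (m + 2) → ℕ) : Submodule ℝ (EuclideanSpace ℝ (Fin n)) :=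
  Submodule.span ℝ (Set.range (segVec n m t))

/-- orthogonal projection `π_{E_t}` of `ℝⁿ` onto `E_t`. -/
def projE (n m : ℕ) (t : Fin (m + 2) → ℕ) (x : EuclideanSpace ℝ (Fin n)) :
    EuclideanSpace ℝ (Fin n) :=
  (Submodule.orthogonalProjectionOnto (Esp n m t) x : EuclideanSpace ℝ (Fin n))

/-- `x = (x_1, …, x_n)`. -/
def vecOf (n : ℕ) (x : ℕ → ℝ) : EuclideanSpace ℝ (Fin n) :=
  WithLp.toLp 2 fun i => x ((i : ℕ) + 1)

/-- `Bx = (x_0, …, x_{n-1})`. -/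
def bvecOf (n : ℕ) (x : ℕ → ℝ) : EuclideanSpace ℝ (Fin n) :=
  WithLp.toLp 2 fun i => x (i : ℕ)

/-- the decorrelated vector `x - ρ Bx`. -/
def decor (n : ℕ) (x : ℕ → ℝ) (r : ℝ) : EuclideanSpace ℝ (Fin n) :=
  vecOf n x - r • bvecOf n x

/-- `J_n(x, t) = (1/n)(‖π_{E_{t*}} x‖² - ‖π_{E_t} x‖²)`. -/
def Jn (n m : ℕ) (tstar t : Fin (m + 2) → ℕ) (x : EuclideanSpace ℝ (Fin n)) : ℝ :=
  (‖projE n m tstar x‖ ^ 2 - ‖projE n m t x‖ ^ 2) / n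

/-- `K_n(x, t) = (1/n)‖(π_{E_{t*}} - π_{E_t}) 𝔼x‖²`. -/
def Kn (n m : ℕ) (tstar t : Fin (m + 2) → ℕ) (Ex : EuclideanSpace ℝ (Fin n)) : ℝ :=
  ‖projE n m tstar Ex - projE n m t Ex‖ ^ 2 / n

/-- `V_n(x, t)`. -/
def Vn (n m : ℕ) (tstar t : Fin (m + 2) → ℕ) (x Ex : EuclideanSpace ℝ (Fin n)) : ℝ :=
  (‖projE n m tstar (x - Ex)‖ ^ 2 - ‖projE n m t (x - Ex)‖ ^ 2) / n

/-- `W_n(x, t)`. -/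
def Wn (n m : ℕ) (tstar t : Fin (m + 2) → ℕ) (x Ex : EuclideanSpace ℝ (Fin n)) : ℝ :=
  2 * (⟪projE n m tstar (x - Ex), projE n m tstar Ex⟫ -
       ⟪projE n m t (x - Ex), projE n m t Ex⟫) / n

/-- `C'_{ν,γ,n,m}(I)`: admissible configurations `t` with
`ν λ̲⁻² ≤ ‖t - t*‖ ≤ n γ Δ_{τ*}`, `t_k ≥ t*_k` for all `k`,
`ν λ̲⁻² ≤ t_k - t*_k ≤ n γ Δ_{τ*}` for `k ∈ I` and `t_k - t*_k < ν λ̲⁻²` for `k ∉ I`. -/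
def CprimeI (n m : ℕ) (tstar : Fin (m + 2) → ℕ) (lamb Dtau ν γ : ℝ)
    (I : Set (Fin m)) : Set (Fin (m + 2) → ℕ) :=
  {t | t ∈ Anm n m ∧
    ν / lamb ^ 2 ≤
      Real.sqrt (∑ k : Fin m,
        ((t k.castSucc.succ : ℝ) - (tstar k.castSucc.succ : ℝ)) ^ 2) ∧
    Real.sqrt (∑ k : Fin m,
        ((t k.castSucc.succ : ℝ) - (tstar k.castSucc.succ : ℝ)) ^ 2) ≤ n * γ * Dtau ∧
    (∀ k : Fin m, tstar k.castSucc.succ ≤ t k.castSucc.succ) ∧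
    (∀ k : Fin m, k ∈ I →
      ν / lamb ^ 2 ≤ (t k.castSucc.succ : ℝ) - (tstar k.castSucc.succ : ℝ) ∧
      (t k.castSucc.succ : ℝ) - (tstar k.castSucc.succ : ℝ) ≤ n * γ * Dtau) ∧
    (∀ k : Fin m, k ∉ I →
      (t k.castSucc.succ : ℝ) - (tstar k.castSucc.succ : ℝ) < ν / lamb ^ 2)}

open scoped NNReal ENNReal

namespace Stmt4Aux

lemma norm_projE_le (n m : ℕ) (t : Fin (m + 2) → ℕ) (x : EuclideanSpace ℝ (Fin n)) :
    ‖projE n m t x‖ ≤ ‖x‖ := by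
  calc ‖projE n m t x‖ = ‖Submodule.orthogonalProjectionOnto (Esp n m t) x‖ := rfl
  _ ≤ ‖Submodule.orthogonalProjectionOnto (Esp n m t)‖ * ‖x‖ := (Submodule.orthogonalProjectionOnto (Esp n m t)).le_opNorm x
  _ ≤ 1 * ‖x‖ := mul_le_mul_of_nonneg_right (Submodule.orthogonalProjectionOnto_norm_le _) (norm_nonneg x)
  _ = ‖x‖ := one_mul _

lemma abs_sq_projE_sub_le (n m : ℕ) (t : Fin (m + 2) → ℕ) (x y : EuclideanSpace ℝ (Fin n)) :
    |‖projE n m t x‖ ^ 2 - ‖projE n m t y‖ ^ 2| ≤ ‖x + y‖ * ‖x - y‖ := by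
  have hadd : projE n m t x + projE n m t y = projE n m t (x + y) := by
    simp only [projE, ← Submodule.coe_add, ← map_add]
  have hsub : projE n m t x - projE n m t y = projE n m t (x - y) := by
    simp only [projE, ← Submodule.coe_sub, ← map_sub]
  have hip : ‖projE n m t x‖ ^ 2 - ‖projE n m t y‖ ^ 2 =
      ⟪projE n m t x + projE n m t y, projE n m t x - projE n m t y⟫ := by
    rw [inner_add_left, inner_sub_right, inner_sub_right, real_inner_self_eq_norm_sq,
      real_inner_self_eq_norm_sq, real_inner_comm]
    ring
  rw [hip, hadd, hsub]
  calc |⟪projE n m t (x + y), projE n m t (x - y)⟫|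
      ≤ ‖projE n m t (x + y)‖ * ‖projE n m t (x - y)‖ := abs_real_inner_le_norm _ _
  _ ≤ ‖x + y‖ * ‖x - y‖ :=
      mul_le_mul (norm_projE_le _ _ _ _) (norm_projE_le _ _ _ _) (norm_nonneg _) (norm_nonneg _)

lemma abs_Jn_sub_le (n m : ℕ) (ts t : Fin (m + 2) → ℕ) (x y : EuclideanSpace ℝ (Fin n)) :
    |Jn n m ts t x - Jn n m ts t y| ≤ 2 * (‖x + y‖ * ‖x - y‖) / n := by
  rcases Nat.eq_zero_or_pos n with hn | hn
  · subst hn; simp [Jn]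
  have hn' : (0:ℝ) < n := by exact_mod_cast hn
  have : Jn n m ts t x - Jn n m ts t y =
      ((‖projE n m ts x‖ ^ 2 - ‖projE n m ts y‖ ^ 2) -
        (‖projE n m t x‖ ^ 2 - ‖projE n m t y‖ ^ 2)) / n := by
    simp only [Jn]; ring
  rw [this, abs_div, abs_of_pos hn']
  gcongr
  calc |(‖projE n m ts x‖ ^ 2 - ‖projE n m ts y‖ ^ 2) -
        (‖projE n m t x‖ ^ 2 - ‖projE n m t y‖ ^ 2)|
      ≤ |‖projE n m ts x‖ ^ 2 - ‖projE n m ts y‖ ^ 2| +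
        |‖projE n m t x‖ ^ 2 - ‖projE n m t y‖ ^ 2| := abs_sub _ _
  _ ≤ ‖x + y‖ * ‖x - y‖ + ‖x + y‖ * ‖x - y‖ := by
      gcongr
      · exact abs_sq_projE_sub_le _ _ _ _ _
      · exact abs_sq_projE_sub_le _ _ _ _ _
  _ = 2 * (‖x + y‖ * ‖x - y‖) := by ring

lemma sup_decor_bound (n m : ℕ) (ts : Fin (m + 2) → ℕ) (x : ℕ → ℝ) (r ρ : ℝ)
    (hρ : |ρ| ≤ 1) :
    (⨆ t ∈ Anm n m, |Jn n m ts t (decor n x r) - Jn n m ts t (decor n x ρ)|) ≤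
      2 * (((2 * ‖vecOf n x‖ + 2 * ‖bvecOf n x‖ + |r - ρ| * ‖bvecOf n x‖) *
        (|r - ρ| * ‖bvecOf n x‖))) / n := by
  have hrhs : (0:ℝ) ≤ 2 * (((2 * ‖vecOf n x‖ + 2 * ‖bvecOf n x‖ + |r - ρ| * ‖bvecOf n x‖) *
      (|r - ρ| * ‖bvecOf n x‖))) / n := by positivity
  refine Real.iSup_le (fun t => Real.iSup_le (fun _ => ?_) hrhs) hrhs
  refine le_trans (abs_Jn_sub_le n m ts t _ _) ?_
  have hsub : decor n x r - decor n x ρ = (ρ - r) • bvecOf n x := by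
    simp only [decor]; module
  have h1 : ‖decor n x r - decor n x ρ‖ = |r - ρ| * ‖bvecOf n x‖ := by
    rw [hsub, norm_smul, Real.norm_eq_abs, abs_sub_comm]
  have h2 : ‖decor n x r + decor n x ρ‖ ≤
      2 * ‖vecOf n x‖ + 2 * ‖bvecOf n x‖ + |r - ρ| * ‖bvecOf n x‖ := by
    have hr : |r| ≤ 1 + |r - ρ| := by
      calc |r| = |(r - ρ) + ρ| := by ring_nf
      _ ≤ |r - ρ| + |ρ| := abs_add_le _ _
      _ ≤ 1 + |r - ρ| := by linarith
    calc ‖decor n x r + decor n x ρ‖ ≤ ‖decor n x r‖ + ‖decor n x ρ‖ := norm_add_le _ _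
    _ ≤ (‖vecOf n x‖ + |r| * ‖bvecOf n x‖) + (‖vecOf n x‖ + |ρ| * ‖bvecOf n x‖) := by
        gcongr <;>
        · refine le_trans (norm_sub_le _ _) ?_
          rw [norm_smul, Real.norm_eq_abs]
    _ ≤ (‖vecOf n x‖ + (1 + |r - ρ|) * ‖bvecOf n x‖) + (‖vecOf n x‖ + 1 * ‖bvecOf n x‖) := by
        gcongr
    _ = 2 * ‖vecOf n x‖ + 2 * ‖bvecOf n x‖ + |r - ρ| * ‖bvecOf n x‖ := by ring
  have key : ‖decor n x r + decor n x ρ‖ * ‖decor n x r - decor n x ρ‖ ≤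
      (2 * ‖vecOf n x‖ + 2 * ‖bvecOf n x‖ + |r - ρ| * ‖bvecOf n x‖) *
        (|r - ρ| * ‖bvecOf n x‖) := by
    rw [h1]
    exact mul_le_mul_of_nonneg_right h2 (by positivity)
  gcongr

open Real in
lemma gauss_L2 (v : ℝ≥0) (hv : v ≠ 0) : eLpNorm id 2 (gaussianReal 0 v) < ⊤ := by
  rw [eLpNorm_eq_lintegral_rpow_enorm_toReal two_ne_zero ENNReal.ofNat_ne_top]
  refine ENNReal.rpow_lt_top_of_nonneg (by positivity) ?_
  have hv' : (0:ℝ) < v := by positivity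
  have hb : (0:ℝ) < 1/(2*(v:ℝ)) := by positivity
  have hint : Integrable (fun x : ℝ => x ^ (2:ℝ) * Real.exp (-(1/(2*(v:ℝ))) * x ^ 2)) :=
    integrable_rpow_mul_exp_neg_mul_sq hb (by norm_num)
  have hint2 : Integrable (fun x : ℝ => gaussianPDFReal 0 v x * x ^ 2) := by
    have heq : (fun x : ℝ => gaussianPDFReal 0 v x * x ^ 2) =
        fun x => (Real.sqrt (2 * π * v))⁻¹ *
          (x ^ (2:ℝ) * Real.exp (-(1/(2*(v:ℝ))) * x ^ 2)) := by
      funext x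
      rw [gaussianPDFReal, show (x:ℝ) ^ (2:ℝ) = x ^ 2 by
        rw [show (2:ℝ) = ((2:ℕ):ℝ) by norm_num, Real.rpow_natCast]]
      rw [show -(x - 0) ^ 2 / (2 * (v:ℝ)) = -(1/(2*(v:ℝ))) * x ^ 2 by
        rw [sub_zero]; field_simp]
      ring
    rw [heq]
    exact hint.const_mul _
  rw [gaussianReal_of_var_ne_zero 0 hv,
    lintegral_withDensity_eq_lintegral_mul _ (measurable_gaussianPDF 0 v)
      (by fun_prop : Measurable fun x : ℝ => ‖id x‖ₑ ^ (2:ℝ≥0∞).toReal)]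
  refine (lt_of_le_of_lt (lintegral_mono (fun x => ?_)) hint2.2).ne
  have h2 : ‖x‖ₑ ^ (2:ℝ≥0∞).toReal = ENNReal.ofReal (x ^ 2) := by
    rw [show ((2:ℝ≥0∞)).toReal = ((2:ℕ):ℝ) by simp,
      Real.enorm_eq_ofReal_abs,
      ENNReal.ofReal_rpow_of_nonneg (abs_nonneg x) (by positivity),
      Real.rpow_natCast, sq_abs]
  simp only [Pi.mul_apply, id_eq, gaussianPDF, h2]
  rw [← ENNReal.ofReal_mul (gaussianPDFReal_nonneg 0 v x)]
  exact Real.ofReal_le_enorm _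

end Stmt4Aux

open Stmt4Aux

set_option maxHeartbeats 1600000 in
theorem stmt_4
    {Ω : Type*} [MeasurableSpace Ω] (P : Measure Ω) [IsProbabilityMeasure P]
    (m : ℕ) (hm : 1 ≤ m)
    (σ : ℝ) (hσ : 0 < σ)
    (ρ : ℝ) (hρ₁ : -1 < ρ) (hρ₂ : ρ < 1)
    (μ : Fin (m + 1) → ℝ)
    (τ : Fin (m + 2) → ℝ) (hτ0 : τ 0 = 0) (hτ1 : τ (Fin.last (m + 1)) = 1)
    (hτmono : StrictMono τ)
    (tstar : ℕ → Fin (m + 2) → ℕ)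
    (htstardef : ∀ n k, tstar n k = ⌊(n : ℝ) * τ k⌋₊)
    (ε : ℕ → Ω → ℝ) (hεmeas : ∀ i, Measurable (ε i))
    (η : ℕ → Ω → ℝ) (hηmeas : Measurable (η 0))
    (hηrec : ∀ i : ℕ, ∀ ω, η (i + 1) ω = ρ * η i ω + ε (i + 1) ω)
    (hindep : iIndepFun
      (fun i : ℕ => if i = 0 then η 0 else ε i) P)
    (hεdist : ∀ i : ℕ, 1 ≤ i → P.map (ε i) = gaussianReal 0 (σ ^ 2).toNNReal)
    (hηdist : P.map (η 0) = gaussianReal 0 ((σ ^ 2) / (1 - ρ ^ 2)).toNNReal)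
    (δ : Fin (m + 1) → ℝ) (hδ : ∀ k, δ k = (1 - ρ) * μ k)
    (z : ℕ → ℕ → Ω → ℝ)
    (hz0 : ∀ n ω, z n 0 ω = μ 0 + η 0 ω)
    (hzrec : ∀ n, ∀ k : Fin (m + 1), ∀ i : ℕ,
      tstar n k.castSucc < i → i ≤ tstar n k.succ →
      ∀ ω, z n i ω = ρ * z n (i - 1) ω + δ k + ε i ω)
    (ρbar : ℕ → Ω → ℝ) (hρbarmeas : ∀ n, Measurable (ρbar n))
    (hρbar : IsBigOP P (fun n ω => ρbar n ω - ρ) (fun n => 1 / Real.sqrt n))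
 :
    (IsBigOP P (fun n ω => ⨆ t ∈ Anm n m,
        |Jn n m (tstar n) t (decor n (fun i => z n i ω) (ρbar n ω)) -
          Jn n m (tstar n) t (decor n (fun i => z n i ω) ρ)|)
      (fun n => 1 / Real.sqrt n)) ∧
    (∀ ν : ℝ, 0 < ν →
      Tendsto (fun n => (P {ω | ν < ⨆ t ∈ Anm n m,
        |Jn n m (tstar n) t (decor n (fun i => z n i ω) (ρbar n ω)) -
          Jn n m (tstar n) t (decor n (fun i => z n i ω) ρ)|}).toReal) atTop (nhds 0)) := by
  classical
  have hr1 : |ρ| < 1 := abs_lt.mpr ⟨hρ₁, hρ₂⟩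
  have h1r : (0:ℝ) < 1 - |ρ| := by linarith
  have hv1 : (σ ^ 2).toNNReal ≠ 0 := by
    simp only [ne_eq, Real.toNNReal_eq_zero, not_le]
    positivity
  have hv2 : ((σ ^ 2) / (1 - ρ ^ 2)).toNNReal ≠ 0 := by
    simp only [ne_eq, Real.toNNReal_eq_zero, not_le]
    have h2 : 0 < 1 - ρ ^ 2 := by
      have hh := mul_pos (show (0:ℝ) < 1 - ρ by linarith) (show (0:ℝ) < 1 + ρ by linarith)
      have hexp : (1 - ρ) * (1 + ρ) = 1 - ρ ^ 2 := by ring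
      linarith [hexp ▸ hh]
    positivity
  have hEg : eLpNorm id 2 (gaussianReal 0 (σ ^ 2).toNNReal) < ⊤ := gauss_L2 _ hv1
  have hEps : ∀ i, 1 ≤ i →
      eLpNorm (ε i) 2 P = eLpNorm id 2 (gaussianReal 0 (σ ^ 2).toNNReal) := by
    intro i hi
    rw [← hεdist i hi, eLpNorm_map_measure aestronglyMeasurable_id (hεmeas i).aemeasurable]
    rfl
  have hEh : eLpNorm (η 0) 2 P < ⊤ := by
    have h : eLpNorm (η 0) 2 P = eLpNorm id 2 (P.map (η 0)) := by
      rw [eLpNorm_map_measure aestronglyMeasurable_id hηmeas.aemeasurable]; rfl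
    rw [h, hηdist]
    exact gauss_L2 _ hv2
  obtain ⟨Eg, hEgdef⟩ : ∃ x : ℝ, x = (eLpNorm id 2 (gaussianReal 0 (σ ^ 2).toNNReal)).toReal :=
    ⟨_, rfl⟩
  obtain ⟨Eh, hEhdef⟩ : ∃ x : ℝ, x = (eLpNorm (η 0) 2 P).toReal := ⟨_, rfl⟩
  have hEg0 : 0 ≤ Eg := by rw [hEgdef]; exact ENNReal.toReal_nonneg
  have hEh0 : 0 ≤ Eh := by rw [hEhdef]; exact ENNReal.toReal_nonneg
  set B : ℝ := ∑ k : Fin (m + 1), |δ k| with hBdef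
  have hB0 : 0 ≤ B := Finset.sum_nonneg fun k _ => abs_nonneg _
  have hBk : ∀ k, |δ k| ≤ B := fun k =>
    Finset.single_le_sum (fun k _ => abs_nonneg (δ k)) (Finset.mem_univ k)
  obtain ⟨C', hC'def⟩ : ∃ x : ℝ, x = |μ 0| + Eh + (B + Eg) / (1 - |ρ|) := ⟨_, rfl⟩
  have hdivnn : 0 ≤ (B + Eg) / (1 - |ρ|) := div_nonneg (by linarith) h1r.le
  have hC0 : 0 ≤ C' := by
    rw [hC'def]; linarith [abs_nonneg (μ 0)]
  have ht0 : ∀ n, tstar n 0 = 0 := by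
    intro n; rw [htstardef, hτ0, mul_zero, Nat.floor_zero]
  have htlast : ∀ n, tstar n (Fin.last (m + 1)) = n := by
    intro n; rw [htstardef, hτ1, mul_one, Nat.floor_natCast]
  have hseg : ∀ n i, 0 < i → i ≤ n → ∃ k : Fin (m + 1),
      tstar n k.castSucc < i ∧ i ≤ tstar n k.succ := by
    intro n i hi0 hin
    set S : Finset (Fin (m + 2)) := Finset.univ.filter (fun k => tstar n k < i) with hS
    have hSne : S.Nonempty := ⟨0, by simp [hS, ht0 n, hi0]⟩
    set k0 := S.max' hSne with hk0
    have hk0mem : k0 ∈ S := S.max'_mem hSne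
    have hk0lt : tstar n k0 < i := by
      have h := hk0mem; rw [hS, Finset.mem_filter] at h; exact h.2
    have hk0ne : k0 ≠ Fin.last (m + 1) := by
      intro h; rw [h, htlast n] at hk0lt; omega
    have hklt : (k0 : ℕ) < m + 1 := by
      have h := lt_of_le_of_ne (Fin.le_last k0) hk0ne
      simpa [Fin.lt_def] using h
    refine ⟨⟨(k0 : ℕ), hklt⟩, ?_, ?_⟩
    · have hcs : (⟨(k0 : ℕ), hklt⟩ : Fin (m + 1)).castSucc = k0 := by
        ext; simp
      rw [hcs]; exact hk0lt
    · by_contra h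
      push_neg at h
      have hmem : (⟨(k0 : ℕ), hklt⟩ : Fin (m + 1)).succ ∈ S := by
        rw [hS, Finset.mem_filter]; exact ⟨Finset.mem_univ _, h⟩
      have hle := S.le_max' _ hmem
      rw [← hk0] at hle
      have h2 : (k0 : ℕ) + 1 ≤ (k0 : ℕ) := hle
      omega
  have hPne : (P : Measure Ω) ≠ 0 := IsProbabilityMeasure.ne_zero P
  have hconst2 : ∀ c : ℝ, eLpNorm (fun _ : Ω => c) 2 P = ENNReal.ofReal |c| := by
    intro c
    rw [eLpNorm_const c two_ne_zero hPne]
    simp [Real.enorm_eq_ofReal_abs]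
  have hmain : ∀ n, ∀ i, i ≤ n →
      Measurable (z n i) ∧ eLpNorm (z n i) 2 P ≤ ENNReal.ofReal C' := by
    intro n i
    induction i with
    | zero =>
      intro _
      have hz0' : z n 0 = (fun _ => μ 0) + η 0 := funext fun ω => hz0 n ω
      constructor
      · rw [hz0']; exact measurable_const.add hηmeas
      · rw [hz0']
        calc eLpNorm ((fun _ => μ 0) + η 0) 2 P
            ≤ eLpNorm (fun _ : Ω => μ 0) 2 P + eLpNorm (η 0) 2 P :=
              eLpNorm_add_le aestronglyMeasurable_const hηmeas.aestronglyMeasurable one_le_two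
        _ = ENNReal.ofReal |μ 0| + ENNReal.ofReal Eh := by
              rw [hconst2, hEhdef, ENNReal.ofReal_toReal hEh.ne]
        _ = ENNReal.ofReal (|μ 0| + Eh) := (ENNReal.ofReal_add (abs_nonneg _) hEh0).symm
        _ ≤ ENNReal.ofReal C' := by
              refine ENNReal.ofReal_le_ofReal ?_
              rw [hC'def]; linarith
    | succ j ih =>
      intro hjn
      have hj : j ≤ n := le_trans (Nat.le_succ j) hjn
      obtain ⟨hzm, hzb⟩ := ih hj
      obtain ⟨k, hk1, hk2⟩ := hseg n (j + 1) (Nat.succ_pos j) hjn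
      have hzeq : z n (j + 1) = (ρ • z n j) + ((fun _ => δ k) + ε (j + 1)) := by
        funext ω
        have h := hzrec n k (j + 1) hk1 hk2 ω
        simp only [Nat.add_sub_cancel] at h
        simp only [Pi.add_apply, Pi.smul_apply, smul_eq_mul]
        rw [h]; ring
      constructor
      · rw [hzeq]
        exact ((hzm.const_smul ρ).add (measurable_const.add (hεmeas (j + 1))))
      · have heps : eLpNorm (ε (j + 1)) 2 P = ENNReal.ofReal Eg := by
          rw [hEps (j + 1) (Nat.le_add_left 1 j), hEgdef, ENNReal.ofReal_toReal hEg.ne]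
        calc eLpNorm (z n (j + 1)) 2 P
            ≤ eLpNorm (ρ • z n j) 2 P + eLpNorm ((fun _ => δ k) + ε (j + 1)) 2 P := by
              rw [hzeq]
              exact eLpNorm_add_le (hzm.aestronglyMeasurable.const_smul ρ)
                (aestronglyMeasurable_const.add (hεmeas _).aestronglyMeasurable) one_le_two
        _ ≤ ‖ρ‖ₑ * eLpNorm (z n j) 2 P +
              (eLpNorm (fun _ : Ω => δ k) 2 P + eLpNorm (ε (j + 1)) 2 P) := by
              gcongr
              · rw [eLpNorm_const_smul]
              · exact eLpNorm_add_le aestronglyMeasurable_const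
                  (hεmeas _).aestronglyMeasurable one_le_two
        _ ≤ ENNReal.ofReal |ρ| * ENNReal.ofReal C' +
              (ENNReal.ofReal B + ENNReal.ofReal Eg) := by
              rw [Real.enorm_eq_ofReal_abs, hconst2, heps]
              gcongr
              exact hBk k
        _ = ENNReal.ofReal (|ρ| * C' + (B + Eg)) := by
              rw [← ENNReal.ofReal_mul (abs_nonneg ρ), ← ENNReal.ofReal_add hB0 hEg0,
                ← ENNReal.ofReal_add (mul_nonneg (abs_nonneg ρ) hC0) (by linarith)]
        _ ≤ ENNReal.ofReal C' := by
              refine ENNReal.ofReal_le_ofReal ?_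
              have hkey : |ρ| * ((B + Eg) / (1 - |ρ|)) + (B + Eg) = (B + Eg) / (1 - |ρ|) := by
                field_simp
                ring
              have hA : |ρ| * (|μ 0| + Eh) ≤ |μ 0| + Eh :=
                mul_le_of_le_one_left (by linarith [abs_nonneg (μ 0)]) hr1.le
              have hexpand : |ρ| * (|μ 0| + Eh + (B + Eg) / (1 - |ρ|)) + (B + Eg) =
                  |ρ| * (|μ 0| + Eh) + (|ρ| * ((B + Eg) / (1 - |ρ|)) + (B + Eg)) := by ring
              rw [hC'def, hexpand, hkey]
              linarith
  have hsum : ∀ n i, i ≤ n →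
      (∫⁻ ω, ENNReal.ofReal ((z n i ω) ^ 2) ∂P) ≤ ENNReal.ofReal (C' ^ 2) := by
    intro n i hin
    have hpt : ∀ ω, ENNReal.ofReal ((z n i ω) ^ 2) =
        ‖z n i ω‖ₑ ^ (2 : ℝ≥0∞).toReal := by
      intro ω
      rw [show ((2 : ℝ≥0∞)).toReal = ((2 : ℕ) : ℝ) by simp,
        Real.enorm_eq_ofReal_abs,
        ENNReal.ofReal_rpow_of_nonneg (abs_nonneg _) (by positivity),
        Real.rpow_natCast, sq_abs]
    have hsn : (eLpNorm (z n i) 2 P) ^ (2 : ℝ) =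
        ∫⁻ ω, ‖z n i ω‖ₑ ^ (2 : ℝ≥0∞).toReal ∂P := by
      rw [eLpNorm_eq_lintegral_rpow_enorm_toReal two_ne_zero ENNReal.ofNat_ne_top,
        ← ENNReal.rpow_mul]
      norm_num
    calc ∫⁻ ω, ENNReal.ofReal ((z n i ω) ^ 2) ∂P
        = (eLpNorm (z n i) 2 P) ^ (2 : ℝ) := by
          rw [hsn]; exact lintegral_congr hpt
    _ ≤ (ENNReal.ofReal C') ^ (2 : ℝ) :=
          ENNReal.rpow_le_rpow (hmain n i hin).2 (by norm_num)
    _ = ENNReal.ofReal (C' ^ 2) := by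
          rw [ENNReal.ofReal_rpow_of_nonneg hC0 (by norm_num),
            show (C' : ℝ) ^ (2:ℝ) = C' ^ 2 by
              rw [show (2:ℝ) = ((2:ℕ):ℝ) by norm_num, Real.rpow_natCast]]
  have key : IsBigOP P (fun n ω => ⨆ t ∈ Anm n m,
      |Jn n m (tstar n) t (decor n (fun i => z n i ω) (ρbar n ω)) -
        Jn n m (tstar n) t (decor n (fun i => z n i ω) ρ)|)
      (fun n => 1 / Real.sqrt n) := by
    intro e he
    obtain ⟨M₁, hM₁pos, N₁, hN₁⟩ := hρbar (e / 2) (half_pos he)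
    set c2 : ℝ := C' ^ 2 with hc2def
    have hc2 : 0 ≤ c2 := sq_nonneg _
    set M₂ : ℝ := (4 * c2 + 4) / e with hM₂def
    have hM₂pos : 0 < M₂ := div_pos (by linarith) he
    have hbad2 : ∀ n, 1 ≤ n →
        (P {ω | M₂ * n < ∑ i ∈ Finset.range (n + 1), (z n i ω) ^ 2}).toReal ≤ e / 2 := by
      intro n hn
      have hn' : (1:ℝ) ≤ n := by exact_mod_cast hn
      set T : Ω → ℝ := fun ω => ∑ i ∈ Finset.range (n + 1), (z n i ω) ^ 2 with hTdef
      set f : Ω → ℝ≥0∞ := fun ω => ENNReal.ofReal (T ω) with hfdef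
      have hfm : Measurable f := by
        apply Measurable.ennreal_ofReal
        apply Finset.measurable_sum
        intro i hi
        have hile : i ≤ n := by
          have := Finset.mem_range.mp hi; omega
        exact (hmain n i hile).1.pow_const 2
      have hTlint : ∫⁻ ω, f ω ∂P ≤ ((n + 1 : ℕ) : ℝ≥0∞) * ENNReal.ofReal c2 := by
        have hf' : f = fun ω => ∑ i ∈ Finset.range (n + 1),
            ENNReal.ofReal ((z n i ω) ^ 2) := by
          funext ω
          exact ENNReal.ofReal_sum_of_nonneg (fun i _ => sq_nonneg _)
        rw [hf', lintegral_finset_sum]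
        · calc ∑ i ∈ Finset.range (n + 1), ∫⁻ ω, ENNReal.ofReal ((z n i ω) ^ 2) ∂P
              ≤ ∑ _i ∈ Finset.range (n + 1), ENNReal.ofReal c2 := by
                refine Finset.sum_le_sum fun i hi => ?_
                have hile : i ≤ n := by have := Finset.mem_range.mp hi; omega
                exact hsum n i hile
          _ = ((n + 1 : ℕ) : ℝ≥0∞) * ENNReal.ofReal c2 := by
                rw [Finset.sum_const, Finset.card_range, nsmul_eq_mul]
        · intro i hi
          have hile : i ≤ n := by have := Finset.mem_range.mp hi; omega
          exact ((hmain n i hile).1.pow_const 2).ennreal_ofReal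
      have hsubset : {ω | M₂ * n < T ω} ⊆ {ω | ENNReal.ofReal (M₂ * n) ≤ f ω} :=
        fun ω hω => ENNReal.ofReal_le_ofReal (le_of_lt hω)
      have hM2n : (0:ℝ) < M₂ * n := mul_pos hM₂pos (lt_of_lt_of_le one_pos hn')
      have markov := mul_meas_ge_le_lintegral₀ (μ := P) hfm.aemeasurable (ENNReal.ofReal (M₂ * n))
      have hPle : P {ω | ENNReal.ofReal (M₂ * n) ≤ f ω} ≤ ENNReal.ofReal (e / 2) := by
        have hchain : ENNReal.ofReal (M₂ * n) * P {ω | ENNReal.ofReal (M₂ * n) ≤ f ω} ≤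
            ENNReal.ofReal (M₂ * n) * ENNReal.ofReal (e / 2) := by
          refine le_trans markov (le_trans hTlint ?_)
          rw [← ENNReal.ofReal_natCast, ← ENNReal.ofReal_mul (by positivity),
            ← ENNReal.ofReal_mul (le_of_lt hM2n)]
          refine ENNReal.ofReal_le_ofReal ?_
          push_cast
          have he' : e ≠ 0 := ne_of_gt he
          have heq2 : M₂ * ↑n * (e / 2) = (2 * c2 + 2) * n := by
            rw [hM₂def]; field_simp; ring
          rw [heq2]
          have hcc : c2 * 1 ≤ c2 * n := mul_le_mul_of_nonneg_left hn' hc2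
          have hnn : (0:ℝ) ≤ n := by linarith
          have hcn : 0 ≤ c2 * n := mul_nonneg hc2 hnn
          linarith [hcc, hcn]
        exact (ENNReal.mul_le_mul_iff_right (ENNReal.ofReal_pos.mpr hM2n).ne' ENNReal.ofReal_ne_top).mp
          hchain
      calc (P {ω | M₂ * ↑n < T ω}).toReal
          ≤ (ENNReal.ofReal (e / 2)).toReal := by
            refine ENNReal.toReal_mono ENNReal.ofReal_ne_top ?_
            exact le_trans (measure_mono hsubset) hPle
      _ = e / 2 := ENNReal.toReal_ofReal (by positivity)
    set sm : ℝ := Real.sqrt M₂ with hsmdef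
    have hsm0 : 0 ≤ sm := Real.sqrt_nonneg _
    have h4 : 0 ≤ M₁ * sm := mul_nonneg hM₁pos.le hsm0
    have h5 : 0 ≤ 4 * sm + M₁ * sm := by linarith
    set K : ℝ := 2 * ((4 * sm + M₁ * sm) * (M₁ * sm)) with hKdef
    have hK0 : 0 ≤ K := by
      rw [hKdef]; exact mul_nonneg (by norm_num) (mul_nonneg h5 h4)
    refine ⟨K + 1, by linarith, max N₁ 1, fun n hn => ?_⟩
    have hnN₁ : N₁ ≤ n := le_trans (le_max_left _ _) hn
    have hn1 : 1 ≤ n := le_trans (le_max_right _ _) hn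
    have hn' : (1:ℝ) ≤ (n:ℝ) := by exact_mod_cast hn1
    have hsn1 : (1:ℝ) ≤ Real.sqrt n := by
      rw [show (1:ℝ) = Real.sqrt 1 by simp]
      exact Real.sqrt_le_sqrt hn'
    have hsnpos : (0:ℝ) < Real.sqrt n := lt_of_lt_of_le one_pos hsn1
    have hsub : {ω | (K + 1) * (1 / Real.sqrt n) <
        abs (⨆ t ∈ Anm n m,
          |Jn n m (tstar n) t (decor n (fun i => z n i ω) (ρbar n ω)) -
            Jn n m (tstar n) t (decor n (fun i => z n i ω) ρ)|)} ⊆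
        {ω | M₁ * (1 / Real.sqrt n) < |ρbar n ω - ρ|} ∪
        {ω | M₂ * (n:ℝ) < ∑ i ∈ Finset.range (n + 1), (z n i ω) ^ 2} := by
      intro ω hω
      by_contra hcon
      rw [Set.mem_union] at hcon
      push_neg at hcon
      obtain ⟨hg1, hg2⟩ := hcon
      rw [Set.mem_setOf_eq, not_lt] at hg1
      rw [Set.mem_setOf_eq, not_lt] at hg2
      rw [Set.mem_setOf_eq] at hω
      set x : ℕ → ℝ := fun i => z n i ω with hxdef
      have hMn : sm * Real.sqrt n = Real.sqrt (M₂ * n) := (Real.sqrt_mul hM₂pos.le _).symm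
      have hnormle : ∀ vv : EuclideanSpace ℝ (Fin n), ‖vv‖ ^ 2 ≤ M₂ * (n:ℝ) →
          ‖vv‖ ≤ sm * Real.sqrt n := by
        intro vv h
        rw [hMn, show ‖vv‖ = Real.sqrt (‖vv‖ ^ 2) from (Real.sqrt_sq (norm_nonneg vv)).symm]
        exact Real.sqrt_le_sqrt h
      have hV : ‖vecOf n x‖ ≤ sm * Real.sqrt n := by
        apply hnormle
        have hnorm2 : ‖vecOf n x‖ ^ 2 = ∑ i : Fin n, (x ((i:ℕ) + 1)) ^ 2 := by
          rw [EuclideanSpace.norm_eq, Real.sq_sqrt (Finset.sum_nonneg fun i _ => sq_nonneg _)]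
          simp [vecOf, Real.norm_eq_abs, sq_abs]
        rw [hnorm2]
        refine le_trans ?_ hg2
        rw [Fin.sum_univ_eq_sum_range (fun i => (x (i + 1)) ^ 2) n,
          Finset.sum_range_succ' (fun i => (x i) ^ 2) n]
        have h0 : (0:ℝ) ≤ (x 0) ^ 2 := sq_nonneg _
        linarith
      have hW : ‖bvecOf n x‖ ≤ sm * Real.sqrt n := by
        apply hnormle
        have hnorm2 : ‖bvecOf n x‖ ^ 2 = ∑ i : Fin n, (x (i:ℕ)) ^ 2 := by
          rw [EuclideanSpace.norm_eq, Real.sq_sqrt (Finset.sum_nonneg fun i _ => sq_nonneg _)]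
          simp [bvecOf, Real.norm_eq_abs, sq_abs]
        rw [hnorm2]
        refine le_trans ?_ hg2
        rw [Fin.sum_univ_eq_sum_range (fun i => (x i) ^ 2) n]
        refine Finset.sum_le_sum_of_subset_of_nonneg ?_ (fun i _ _ => sq_nonneg _)
        exact Finset.range_subset_range.mpr (Nat.le_succ n)
      have hbound := sup_decor_bound n m (tstar n) x (ρbar n ω) ρ hr1.le
      set R : ℝ := |ρbar n ω - ρ| with hRdef
      set V : ℝ := ‖vecOf n x‖ with hVdef
      set W : ℝ := ‖bvecOf n x‖ with hWdef
      have hR0 : 0 ≤ R := abs_nonneg _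
      have hV0 : 0 ≤ V := norm_nonneg _
      have hW0 : 0 ≤ W := norm_nonneg _
      have hsnne : Real.sqrt n ≠ 0 := ne_of_gt hsnpos
      have h1 : R * W ≤ M₁ * sm := by
        calc R * W ≤ (M₁ * (1 / Real.sqrt n)) * (sm * Real.sqrt n) :=
              mul_le_mul hg1 hW hW0 (mul_nonneg hM₁pos.le (by positivity))
        _ = M₁ * sm := by field_simp
      have h2 : 2 * V + 2 * W + R * W ≤ (4 * sm + M₁ * sm) * Real.sqrt n := by
        have hms : M₁ * sm ≤ M₁ * sm * Real.sqrt n :=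
          le_mul_of_one_le_right h4 hsn1
        linarith [hV, hW, h1, hms]
      have hnum : (2 * V + 2 * W + R * W) * (R * W) ≤
          ((4 * sm + M₁ * sm) * Real.sqrt n) * (M₁ * sm) :=
        mul_le_mul h2 h1 (mul_nonneg hR0 hW0) (mul_nonneg h5 (Real.sqrt_nonneg _))
      have hSle : (⨆ t ∈ Anm n m,
          |Jn n m (tstar n) t (decor n x (ρbar n ω)) - Jn n m (tstar n) t (decor n x ρ)|) ≤
          K * (1 / Real.sqrt n) := by
        refine le_trans hbound ?_
        calc 2 * ((2 * V + 2 * W + R * W) * (R * W)) / (n:ℝ)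
            ≤ 2 * (((4 * sm + M₁ * sm) * Real.sqrt n) * (M₁ * sm)) / (n:ℝ) := by
              gcongr
        _ = K * (1 / Real.sqrt n) := by
              rw [hKdef, mul_one_div,
                div_eq_div_iff (by linarith : (0:ℝ) ≠ (n:ℝ)).symm hsnne,
                show (2:ℝ) * (((4 * sm + M₁ * sm) * Real.sqrt n) * (M₁ * sm)) * Real.sqrt n =
                  2 * ((4 * sm + M₁ * sm) * (M₁ * sm)) * (Real.sqrt n * Real.sqrt n) by ring,
                Real.mul_self_sqrt (Nat.cast_nonneg n)]
      have hS0 : 0 ≤ ⨆ t ∈ Anm n m,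
          |Jn n m (tstar n) t (decor n x (ρbar n ω)) - Jn n m (tstar n) t (decor n x ρ)| :=
        Real.iSup_nonneg fun t => Real.iSup_nonneg fun _ => abs_nonneg _
      rw [abs_of_nonneg hS0] at hω
      have hfin := lt_of_lt_of_le hω hSle
      have : (K + 1) * (1 / Real.sqrt n) < K * (1 / Real.sqrt n) := hfin
      linarith [one_div_pos.mpr hsnpos, this]
    calc (P {ω | (K + 1) * (1 / Real.sqrt n) <
        abs (⨆ t ∈ Anm n m,
          |Jn n m (tstar n) t (decor n (fun i => z n i ω) (ρbar n ω)) -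
            Jn n m (tstar n) t (decor n (fun i => z n i ω) ρ)|)}).toReal
        ≤ (P ({ω | M₁ * (1 / Real.sqrt n) < |ρbar n ω - ρ|} ∪
            {ω | M₂ * (n:ℝ) < ∑ i ∈ Finset.range (n + 1), (z n i ω) ^ 2})).toReal :=
          ENNReal.toReal_mono (measure_ne_top _ _) (measure_mono hsub)
    _ ≤ (P {ω | M₁ * (1 / Real.sqrt n) < |ρbar n ω - ρ|} +
          P {ω | M₂ * (n:ℝ) < ∑ i ∈ Finset.range (n + 1), (z n i ω) ^ 2}).toReal :=
          ENNReal.toReal_mono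
            (ENNReal.add_ne_top.mpr ⟨measure_ne_top _ _, measure_ne_top _ _⟩)
            (measure_union_le _ _)
    _ = (P {ω | M₁ * (1 / Real.sqrt n) < |ρbar n ω - ρ|}).toReal +
          (P {ω | M₂ * (n:ℝ) < ∑ i ∈ Finset.range (n + 1), (z n i ω) ^ 2}).toReal :=
          ENNReal.toReal_add (measure_ne_top _ _) (measure_ne_top _ _)
    _ ≤ e / 2 + e / 2 := add_le_add (hN₁ n hnN₁) (hbad2 n hn1)
    _ = e := add_halves e
  refine ⟨key, fun ν hν => ?_⟩
  rw [Metric.tendsto_atTop]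
  intro e he
  obtain ⟨M, hMpos, N₀, hN₀⟩ := key (e / 2) (half_pos he)
  set N₂ : ℕ := Nat.ceil ((M / ν) ^ 2) + 1 with hN₂def
  refine ⟨max N₀ N₂, fun n hn => ?_⟩
  have hnN₀ : N₀ ≤ n := le_trans (le_max_left _ _) hn
  have hnN₂ : N₂ ≤ n := le_trans (le_max_right _ _) hn
  have hn1 : 1 ≤ n := le_trans (Nat.le_add_left 1 _) hnN₂
  have hsnpos : (0:ℝ) < Real.sqrt n := by
    apply Real.sqrt_pos.mpr
    exact_mod_cast Nat.pos_of_ne_zero (by omega)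
  have hMν : M * (1 / Real.sqrt n) ≤ ν := by
    have hceil : (((M / ν) ^ 2 : ℝ)) ≤ (n : ℝ) := by
      refine le_trans (Nat.le_ceil _) ?_
      exact_mod_cast Nat.le_of_succ_le hnN₂
    have h2 : M / ν ≤ Real.sqrt n := by
      rw [show M / ν = Real.sqrt ((M / ν) ^ 2) from (Real.sqrt_sq (by positivity)).symm]
      exact Real.sqrt_le_sqrt hceil
    rw [mul_one_div, div_le_iff₀ hsnpos]
    calc M = (M / ν) * ν := by field_simp
    _ ≤ Real.sqrt n * ν := mul_le_mul_of_nonneg_right h2 hν.le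
    _ = ν * Real.sqrt n := mul_comm _ _
  have hsubset : {ω | ν < ⨆ t ∈ Anm n m,
      |Jn n m (tstar n) t (decor n (fun i => z n i ω) (ρbar n ω)) -
        Jn n m (tstar n) t (decor n (fun i => z n i ω) ρ)|} ⊆
      {ω | M * (1 / Real.sqrt n) <
        abs (⨆ t ∈ Anm n m,
          |Jn n m (tstar n) t (decor n (fun i => z n i ω) (ρbar n ω)) -
            Jn n m (tstar n) t (decor n (fun i => z n i ω) ρ)|)} := by
    intro ω hω
    rw [Set.mem_setOf_eq] at hω ⊢
    exact lt_of_le_of_lt hMν (lt_of_lt_of_le hω (le_abs_self _))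
  have hfinal := le_trans
    (ENNReal.toReal_mono (measure_ne_top _ _) (measure_mono hsubset)) (hN₀ n hnN₀)
  rw [Real.dist_eq, sub_zero, abs_of_nonneg ENNReal.toReal_nonneg]
  exact lt_of_le_of_lt hfinal (half_lt_self he)
end
end

section
/- Let (y_i)_{0≤i≤n} be from Model (1), (z_i) the recursively defined process, and (ρ̄_n) random variables with |ρ̄_n − ρ*| = O_P(n^{−1/2}). Define Δ̄ = (Δ̄_i)_{1≤i≤n} ∈ ℝⁿ by Δ̄_i = Δ*_i + (ρ* − ρ̄_n)(z_{i−1} − y_{i−1}). Then ‖Δ̄‖ = O_P(1), where ‖·‖ is the Euclidean norm on ℝⁿ. -/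
open MeasureTheory ProbabilityTheory Filter
open scoped RealInnerProductSpace

noncomputable section

theorem stmt_13
    {Ω : Type*} [MeasurableSpace Ω] (P : Measure Ω) [IsProbabilityMeasure P]
    (m : ℕ) (hm : 1 ≤ m)
    (σ : ℝ) (hσ : 0 < σ)
    (ρ : ℝ) (hρ₁ : -1 < ρ) (hρ₂ : ρ < 1)
    (μ : Fin (m + 1) → ℝ)
    (τ : Fin (m + 2) → ℝ) (hτ0 : τ 0 = 0) (hτ1 : τ (Fin.last (m + 1)) = 1)
    (hτmono : StrictMono τ)
    (tstar : ℕ → Fin (m + 2) → ℕ)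
    (htstardef : ∀ n k, tstar n k = ⌊(n : ℝ) * τ k⌋₊)
    (ε : ℕ → Ω → ℝ) (hεmeas : ∀ i, Measurable (ε i))
    (η : ℕ → Ω → ℝ) (hηmeas : Measurable (η 0))
    (hηrec : ∀ i : ℕ, ∀ ω, η (i + 1) ω = ρ * η i ω + ε (i + 1) ω)
    (hindep : iIndepFun
      (fun i : ℕ => if i = 0 then η 0 else ε i) P)
    (hεdist : ∀ i : ℕ, 1 ≤ i → P.map (ε i) = gaussianReal 0 (σ ^ 2).toNNReal)
    (hηdist : P.map (η 0) = gaussianReal 0 ((σ ^ 2) / (1 - ρ ^ 2)).toNNReal)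
    (y : ℕ → ℕ → Ω → ℝ)
    (hy0 : ∀ n ω, y n 0 ω = μ 0 + η 0 ω)
    (hyseg : ∀ n, ∀ k : Fin (m + 1), ∀ i : ℕ,
      tstar n k.castSucc < i → i ≤ tstar n k.succ →
      ∀ ω, y n i ω = μ k + η i ω)
    (Δs : ℕ → ℕ → ℝ)
    (hΔ1 : ∀ n, ∀ k : Fin m, Δs n (tstar n k.castSucc.succ + 1) =
      -ρ * (μ k.succ - μ k.castSucc))
    (hΔ2 : ∀ n i, (∀ k : Fin m, i ≠ tstar n k.castSucc.succ + 1) → Δs n i = 0)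
    (z : ℕ → ℕ → Ω → ℝ)
    (hz0 : ∀ n ω, z n 0 ω = y n 0 ω)
    (hzrec : ∀ n, ∀ i : ℕ, ∀ ω, z n (i + 1) ω =
      ((y n (i + 1) ω - ρ * y n i ω) + Δs n (i + 1)) + ρ * z n i ω)
    (ρbar : ℕ → Ω → ℝ) (hρbarmeas : ∀ n, Measurable (ρbar n))
    (hρbar : IsBigOP P (fun n ω => ρbar n ω - ρ) (fun n => 1 / Real.sqrt n))
 :
    IsBigOP P (fun n ω => ‖vecOf n (fun i =>
        Δs n i + (ρ - ρbar n ω) * (z n (i - 1) ω - y n (i - 1) ω))‖) (fun _ => 1) := by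
  classical
  have hρabs : |ρ| < 1 := abs_lt.mpr ⟨hρ₁, hρ₂⟩
  set D : ℝ := ∑ k : Fin m, |ρ * (μ k.succ - μ k.castSucc)| with hDdef
  have hD0 : 0 ≤ D := Finset.sum_nonneg fun k _ => abs_nonneg _
  have hden : 0 < 1 - |ρ| := by linarith
  set C : ℝ := D / (1 - |ρ|) with hCdef
  have hC0 : 0 ≤ C := div_nonneg hD0 hden.le
  -- bound on Δs
  have hΔb : ∀ n i, |Δs n i| ≤ D := by
    intro n i
    by_cases h : ∀ k : Fin m, i ≠ tstar n k.castSucc.succ + 1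
    · rw [hΔ2 n i h]; simpa using hD0
    · push_neg at h
      obtain ⟨k, hk⟩ := h
      rw [hk, hΔ1 n k]
      have habs : |(-ρ) * (μ k.succ - μ k.castSucc)| = |ρ * (μ k.succ - μ k.castSucc)| := by
        rw [neg_mul, abs_neg]
      rw [habs]
      exact Finset.single_le_sum (f := fun k : Fin m => |ρ * (μ k.succ - μ k.castSucc)|)
        (fun _ _ => abs_nonneg _) (Finset.mem_univ k)
  -- bound on z - y
  have hCkey : D + |ρ| * C = C := by
    rw [hCdef]; field_simp; ring
  have hd : ∀ n i ω, |z n i ω - y n i ω| ≤ C := by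
    intro n i ω
    induction i with
    | zero => rw [hz0 n ω]; simpa using hC0
    | succ i ih =>
      have hrec : z n (i+1) ω - y n (i+1) ω = Δs n (i+1) + ρ * (z n i ω - y n i ω) := by
        rw [hzrec n i ω]; ring
      rw [hrec]
      calc |Δs n (i+1) + ρ * (z n i ω - y n i ω)|
          ≤ |Δs n (i+1)| + |ρ * (z n i ω - y n i ω)| := abs_add_le _ _
        _ = |Δs n (i+1)| + |ρ| * |z n i ω - y n i ω| := by rw [abs_mul]
        _ ≤ D + |ρ| * C := add_le_add (hΔb n _)
            (mul_le_mul_of_nonneg_left ih (abs_nonneg ρ))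
        _ = C := hCkey
  intro ε hε
  obtain ⟨M, hM, N, hN⟩ := hρbar ε hε
  have hsqm : 0 ≤ Real.sqrt m * D := mul_nonneg (Real.sqrt_nonneg _) hD0
  have hMC : 0 ≤ M * C := mul_nonneg hM.le hC0
  refine ⟨Real.sqrt m * D + M * C + 1, by linarith, max N 1, fun n hn => ?_⟩
  have hn1 : 1 ≤ n := le_of_max_le_right hn
  have hsqn : (0:ℝ) < Real.sqrt n := Real.sqrt_pos.mpr (by exact_mod_cast hn1)
  have hsub : {ω | (Real.sqrt m * D + M * C + 1) * 1 < ‖vecOf n (fun i =>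
        Δs n i + (ρ - ρbar n ω) * (z n (i - 1) ω - y n (i - 1) ω))‖}
      ⊆ {ω | M * (1 / Real.sqrt n) < |ρbar n ω - ρ|} := by
    intro ω hω
    simp only [Set.mem_setOf_eq] at hω ⊢
    by_contra hcon
    push_neg at hcon
    apply absurd hω
    push_neg
    -- split the vector
    have hsplit : vecOf n (fun i => Δs n i + (ρ - ρbar n ω) * (z n (i - 1) ω - y n (i - 1) ω))
        = vecOf n (fun i => Δs n i)
          + (ρ - ρbar n ω) • vecOf n (fun i => z n (i - 1) ω - y n (i - 1) ω) := by
      ext i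
      simp [vecOf, PiLp.add_apply, PiLp.smul_apply, smul_eq_mul]
    -- norm of Δ part
    have key : ∑ i : Fin n, (Δs n ((i:ℕ)+1))^2 ≤ (m : ℝ) * D^2 := by
      set s : Finset (Fin n) := Finset.univ.filter (fun i : Fin n => Δs n ((i:ℕ)+1) ≠ 0)
        with hsdef
      have h1 : ∑ i ∈ s, (Δs n ((i:ℕ)+1))^2 = ∑ i : Fin n, (Δs n ((i:ℕ)+1))^2 := by
        rw [hsdef]
        refine Finset.sum_filter_of_ne ?_
        intro x _ hx h0
        exact hx (by rw [h0]; ring)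
      have hcard : s.card ≤ m := by
        have h2 : s.card ≤ (Finset.univ : Finset (Fin m)).card := by
          refine Finset.card_le_card_of_injOn
            (fun i => if h : ∃ k : Fin m, (i:ℕ)+1 = tstar n k.castSucc.succ + 1
              then h.choose else ⟨0, hm⟩)
            (fun _ _ => Finset.mem_univ _) ?_
          intro i hi j hj hij
          have hi' : Δs n ((i:ℕ)+1) ≠ 0 := (Finset.mem_filter.mp hi).2
          have hj' : Δs n ((j:ℕ)+1) ≠ 0 := (Finset.mem_filter.mp hj).2
          have hei : ∃ k : Fin m, (i:ℕ)+1 = tstar n k.castSucc.succ + 1 := by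
            by_contra h; push_neg at h
            exact hi' (hΔ2 n _ h)
          have hej : ∃ k : Fin m, (j:ℕ)+1 = tstar n k.castSucc.succ + 1 := by
            by_contra h; push_neg at h
            exact hj' (hΔ2 n _ h)
          simp only [dif_pos hei, dif_pos hej] at hij
          have hsi := hei.choose_spec
          have hsj := hej.choose_spec
          rw [hij] at hsi
          exact Fin.ext (by omega)
        simpa using h2
      calc ∑ i : Fin n, (Δs n ((i:ℕ)+1))^2 = ∑ i ∈ s, (Δs n ((i:ℕ)+1))^2 := h1.symm
        _ ≤ s.card • D^2 := Finset.sum_le_card_nsmul s _ _ (fun i _ => by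
            rw [← sq_abs]
            exact pow_le_pow_left₀ (abs_nonneg _) (hΔb n _) 2)
        _ = (s.card : ℝ) * D^2 := nsmul_eq_mul _ _
        _ ≤ (m : ℝ) * D^2 := by
            have : (s.card : ℝ) ≤ (m : ℝ) := by exact_mod_cast hcard
            nlinarith [sq_nonneg D]
    have hΔnorm : ‖vecOf n (fun i => Δs n i)‖ ≤ Real.sqrt m * D := by
      rw [EuclideanSpace.norm_eq]
      have heq : ∀ i : Fin n, ‖vecOf n (fun i => Δs n i) i‖^2 = (Δs n ((i:ℕ)+1))^2 := by
        intro i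
        rw [Real.norm_eq_abs, sq_abs]
        rfl
      calc Real.sqrt (∑ i : Fin n, ‖vecOf n (fun i => Δs n i) i‖^2)
          = Real.sqrt (∑ i : Fin n, (Δs n ((i:ℕ)+1))^2) := by
            congr 1; exact Finset.sum_congr rfl (fun i _ => heq i)
        _ ≤ Real.sqrt ((m : ℝ) * D^2) := Real.sqrt_le_sqrt key
        _ = Real.sqrt m * D := by
            rw [Real.sqrt_mul (Nat.cast_nonneg m), Real.sqrt_sq hD0]
    have hdnorm : ‖vecOf n (fun i => z n (i - 1) ω - y n (i - 1) ω)‖ ≤ Real.sqrt n * C := by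
      rw [EuclideanSpace.norm_eq]
      have hb : ∀ i : Fin n, ‖vecOf n (fun i => z n (i - 1) ω - y n (i - 1) ω) i‖^2 ≤ C^2 := by
        intro i
        have hcoord : vecOf n (fun i => z n (i - 1) ω - y n (i - 1) ω) i
            = z n i ω - y n i ω := by
          show z n ((i:ℕ)+1-1) ω - y n ((i:ℕ)+1-1) ω = _
          simp
        rw [hcoord, Real.norm_eq_abs]
        exact pow_le_pow_left₀ (abs_nonneg _) (hd n i ω) 2
      calc Real.sqrt (∑ i : Fin n, ‖vecOf n (fun i => z n (i - 1) ω - y n (i - 1) ω) i‖^2)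
          ≤ Real.sqrt ((n : ℝ) * C^2) := by
            refine Real.sqrt_le_sqrt ?_
            calc ∑ i : Fin n, ‖vecOf n (fun i => z n (i - 1) ω - y n (i - 1) ω) i‖^2
                ≤ ∑ _i : Fin n, C^2 := Finset.sum_le_sum (fun i _ => hb i)
              _ = (n : ℝ) * C^2 := by simp [mul_comm]
        _ = Real.sqrt n * C := by
            rw [Real.sqrt_mul (Nat.cast_nonneg n), Real.sqrt_sq hC0]
    have hρb : |ρ - ρbar n ω| ≤ M * (1 / Real.sqrt n) := by
      rw [abs_sub_comm]; exact hcon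
    rw [hsplit]
    calc ‖vecOf n (fun i => Δs n i)
          + (ρ - ρbar n ω) • vecOf n (fun i => z n (i - 1) ω - y n (i - 1) ω)‖
        ≤ ‖vecOf n (fun i => Δs n i)‖
          + ‖(ρ - ρbar n ω) • vecOf n (fun i => z n (i - 1) ω - y n (i - 1) ω)‖ :=
          norm_add_le _ _
      _ = ‖vecOf n (fun i => Δs n i)‖
          + |ρ - ρbar n ω| * ‖vecOf n (fun i => z n (i - 1) ω - y n (i - 1) ω)‖ := by
          rw [norm_smul, Real.norm_eq_abs]
      _ ≤ Real.sqrt m * D + (M * (1 / Real.sqrt n)) * (Real.sqrt n * C) :=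
          add_le_add hΔnorm (mul_le_mul hρb hdnorm (norm_nonneg _)
            (mul_nonneg hM.le (by positivity)))
      _ = Real.sqrt m * D + M * C := by
          field_simp
      _ ≤ (Real.sqrt m * D + M * C + 1) * 1 := by linarith
  simp only [abs_norm]
  calc (P {ω | (Real.sqrt m * D + M * C + 1) * 1 < ‖vecOf n (fun i =>
        Δs n i + (ρ - ρbar n ω) * (z n (i - 1) ω - y n (i - 1) ω))‖}).toReal
      ≤ (P {ω | M * (1 / Real.sqrt n) < |ρbar n ω - ρ|}).toReal :=
        ENNReal.toReal_mono (measure_ne_top P _) (measure_mono hsub)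
    _ ≤ ε := hN n (le_of_max_le_left hn)
end
end
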